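/- For f ∈ C[0, 2π], the function Sf defined by (Sf)(s) = ∫₀^{2π} f(t)(1 + cos(s − t)) dt is nonnegative on [0, 2π] if and only if ∫₀^{2π} f(t) dt ≥ √((∫₀^{2π} f(t)cos t dt)² + (∫₀^{2π} f(t)sin t dt)²). -/

import Mathlib

theorem Sf_nonneg_iff (f : ℝ → ℝ)
    (hcont : ContinuousOn f (Set.Icc (0 : ℝ) (2 * Real.pi))) :
    (∀ s ∈ Set.Icc (0 : ℝ) (2 * Real.pi),
        0 ≤ ∫ t in (0 : ℝ)..(2 * Real.pi), f t * (1 + Real.cos (s - t))) ↔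
      Real.sqrt ((∫ t in (0 : ℝ)..(2 * Real.pi), f t * Real.cos t) ^ 2 +
          (∫ t in (0 : ℝ)..(2 * Real.pi), f t * Real.sin t) ^ 2) ≤
        ∫ t in (0 : ℝ)..(2 * Real.pi), f t := by
  have hpi : (0:ℝ) ≤ 2 * Real.pi := by positivity
  have huIcc : Set.uIcc (0:ℝ) (2*Real.pi) = Set.Icc 0 (2*Real.pi) := Set.uIcc_of_le hpi
  have hcont' : ContinuousOn f (Set.uIcc (0:ℝ) (2*Real.pi)) := huIcc ▸ hcont
  have hint : IntervalIntegrable f MeasureTheory.volume 0 (2*Real.pi) :=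
    hcont'.intervalIntegrable
  have hc : IntervalIntegrable (fun t => f t * Real.cos t) MeasureTheory.volume 0 (2*Real.pi) :=
    (hcont'.mul Real.continuous_cos.continuousOn).intervalIntegrable
  have hs : IntervalIntegrable (fun t => f t * Real.sin t) MeasureTheory.volume 0 (2*Real.pi) :=
    (hcont'.mul Real.continuous_sin.continuousOn).intervalIntegrable
  set A := ∫ t in (0:ℝ)..(2*Real.pi), f t with hA
  set B := ∫ t in (0:ℝ)..(2*Real.pi), f t * Real.cos t with hB
  set C := ∫ t in (0:ℝ)..(2*Real.pi), f t * Real.sin t with hC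
  have key : ∀ s : ℝ, (∫ t in (0:ℝ)..(2*Real.pi), f t * (1 + Real.cos (s - t)))
      = A + Real.cos s * B + Real.sin s * C := by
    intro s
    have heq : ∀ t : ℝ, f t * (1 + Real.cos (s - t))
        = f t + Real.cos s * (f t * Real.cos t) + Real.sin s * (f t * Real.sin t) := by
      intro t; rw [Real.cos_sub]; ring
    simp_rw [heq]
    rw [intervalIntegral.integral_add (hint.add (hc.const_mul _)) (hs.const_mul _),
        intervalIntegral.integral_add hint (hc.const_mul _),
        intervalIntegral.integral_const_mul, intervalIntegral.integral_const_mul]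
  have hr0 : 0 ≤ B ^ 2 + C ^ 2 := by positivity
  have hrsq : Real.sqrt (B ^ 2 + C ^ 2) ^ 2 = B ^ 2 + C ^ 2 := Real.sq_sqrt hr0
  have hrnn : 0 ≤ Real.sqrt (B ^ 2 + C ^ 2) := Real.sqrt_nonneg _
  constructor
  · intro h
    rcases eq_or_lt_of_le hrnn with h0 | hpos
    · -- sqrt = 0 : then B = C = 0
      rw [← h0]
      have hBC : B ^ 2 + C ^ 2 = 0 := by rw [← hrsq, ← h0]; ring
      have hB0 : B = 0 := by nlinarith [sq_nonneg B, sq_nonneg C]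
      have hC0 : C = 0 := by nlinarith [sq_nonneg B, sq_nonneg C]
      have := h 0 ⟨le_refl 0, hpi⟩
      rw [key 0] at this
      simpa [hB0, hC0] using this
    · set r := Real.sqrt (B ^ 2 + C ^ 2) with hrdef
      set x := -B / r with hx
      set y := -C / r with hy
      have hxy : x ^ 2 + y ^ 2 = 1 := by
        rw [hx, hy, div_pow, div_pow, ← add_div, div_eq_one_iff_eq (pow_pos hpos 2).ne', neg_sq, neg_sq, hrsq]
      have hx1 : -1 ≤ x := by nlinarith [sq_nonneg y]
      have hx2 : x ≤ 1 := by nlinarith [sq_nonneg y]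
      -- choose θ with cos θ = x, sin θ = y, θ ∈ [0, 2π]
      obtain ⟨θ, hθmem, hθcos, hθsin⟩ :
          ∃ θ, θ ∈ Set.Icc (0:ℝ) (2*Real.pi) ∧ Real.cos θ = x ∧ Real.sin θ = y := by
        rcases le_or_gt 0 y with hy0 | hy0
        · refine ⟨Real.arccos x, ⟨Real.arccos_nonneg x, ?_⟩, Real.cos_arccos hx1 hx2, ?_⟩
          · linarith [Real.arccos_le_pi x, Real.pi_pos]
          · rw [Real.sin_arccos]
            rw [show (1:ℝ) - x ^ 2 = y ^ 2 by linarith]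
            exact Real.sqrt_sq hy0
        · refine ⟨2*Real.pi - Real.arccos x, ⟨?_, ?_⟩, ?_, ?_⟩
          · linarith [Real.arccos_le_pi x, Real.pi_pos]
          · linarith [Real.arccos_nonneg x]
          · rw [Real.cos_sub, Real.cos_two_pi, Real.sin_two_pi,
              Real.cos_arccos hx1 hx2]; ring
          · rw [Real.sin_sub, Real.cos_two_pi, Real.sin_two_pi, Real.sin_arccos]
            rw [show (1:ℝ) - x ^ 2 = y ^ 2 by linarith]
            rw [Real.sqrt_sq_eq_abs, abs_of_neg hy0]; ring
      have := h θ hθmem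
      rw [key θ, hθcos, hθsin] at this
      have hxB : x * B = -(B^2) / r := by rw [hx]; ring
      have hyC : y * C = -(C^2) / r := by rw [hy]; ring
      rw [hxB, hyC] at this
      have hr2 : r ^ 2 = B ^ 2 + C ^ 2 := hrsq
      -- 0 ≤ A - (B^2+C^2)/r = A - r
      have : 0 ≤ A - r := by
        have h1 : A + -(B^2)/r + -(C^2)/r = A - (B^2 + C^2)/r := by ring
        rw [h1] at this
        have h2 : (B^2 + C^2)/r = r := by
          rw [← hr2]; field_simp
        rw [h2] at this; linarith
      linarith
  · intro h s _
    rw [key s]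
    have hcs := Real.sin_sq_add_cos_sq s
    nlinarith [sq_nonneg (B * Real.sin s - C * Real.cos s), sq_nonneg (Real.cos s * B + Real.sin s * C + Real.sqrt (B^2+C^2))]
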